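/- Let M be an abelian group and φ : M → M an endomorphism. Let M̂ be the direct limit (colimit) of the ℕ-indexed system M →φ M →φ M →φ ⋯, with canonical maps ι_n : M → M̂ (from the n-th copy), and let φ̂ : M̂ → M̂ be the endomorphism induced by φ (so φ̂ ∘ ι_n = ι_n ∘ φ for all n); φ̂ is an automorphism of M̂. Then ι₀ restricts to an isomorphism ker(id_M − φ) ≅ ker(id_{M̂} − φ̂), and ι₀ induces an isomorphism coker(id_M − φ) ≅ coker(id_{M̂} − φ̂). -/

import Mathlib

/-- Iterates of an endomorphism, as an `AddMonoidHom`. -/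
private def pw {M : Type} [AddCommGroup M] (φ : M →+ M) : ℕ → (M →+ M)
  | 0 => AddMonoidHom.id M
  | n + 1 => (pw φ n).comp φ

private lemma pw_zero {M : Type} [AddCommGroup M] (φ : M →+ M) (x : M) :
    pw φ 0 x = x := rfl

private lemma pw_succ {M : Type} [AddCommGroup M] (φ : M →+ M) (n : ℕ) (x : M) :
    pw φ (n + 1) x = pw φ n (φ x) := rfl

private lemma pw_comm {M : Type} [AddCommGroup M] (φ : M →+ M) (n : ℕ) (x : M) :
    φ (pw φ n x) = pw φ n (φ x) := by
  induction n generalizing x with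
  | zero => rfl
  | succ n ih => rw [pw_succ, pw_succ, ih (φ x)]

private lemma pw_add {M : Type} [AddCommGroup M] (φ : M →+ M) (a b : ℕ) (x : M) :
    pw φ (a + b) x = pw φ a (pw φ b x) := by
  induction b generalizing x with
  | zero => rfl
  | succ b ih => rw [show a + (b + 1) = (a + b) + 1 from rfl, pw_succ, pw_succ, ih (φ x)]

private lemma pw_fix {M : Type} [AddCommGroup M] (φ : M →+ M) {x : M} (hx : φ x = x) (k : ℕ) :
    pw φ k x = x := by
  induction k with
  | zero => rfl
  | succ k ih => rw [pw_succ, hx, ih]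

/-- Let `M` be an abelian group and `φ : M → M` an endomorphism.  Let
`M̂` (here `Mh`) be the direct limit of the system `M →φ M →φ M →φ ⋯`, presented by its
canonical maps `ι n : M →+ Mh` (with `ι n = ι (n+1) ∘ φ`) and its universal property, and
let `φ̂` (here `φh`) be the endomorphism induced by `φ`, i.e. the unique one with
`φh ∘ ι n = ι n ∘ φ` for all `n`.  Then `φh` is an automorphism of `Mh`, `ι 0` restricts
to an isomorphism `ker (id − φ) ≅ ker (id − φh)`, and `ι 0` induces an isomorphism
`coker (id − φ) ≅ coker (id − φh)`. -/
theorem stmt10 (M : Type) [AddCommGroup M] (φ : M →+ M)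
    (Mh : Type) [AddCommGroup Mh] (ι : ℕ → (M →+ Mh))
    (hcoc : ∀ (n : ℕ) (x : M), ι n x = ι (n + 1) (φ x))
    (huniv : ∀ (P : Type) [AddCommGroup P] (g : ℕ → (M →+ P)),
      (∀ (n : ℕ) (x : M), g n x = g (n + 1) (φ x)) →
        ∃! h : Mh →+ P, ∀ n : ℕ, h.comp (ι n) = g n)
    (φh : Mh →+ Mh) (hφh : ∀ (n : ℕ) (x : M), φh (ι n x) = ι n (φ x)) :
    -- `φh` is an automorphism of `Mh`
    Function.Bijective φh ∧
    -- `ι 0` restricts to an isomorphism `ker (id − φ) ≅ ker (id − φh)`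
    (∃ e : (AddMonoidHom.ker (AddMonoidHom.id M - φ)) ≃+
        (AddMonoidHom.ker (AddMonoidHom.id Mh - φh)),
      ∀ x : (AddMonoidHom.ker (AddMonoidHom.id M - φ)), (e x : Mh) = ι 0 (x : M)) ∧
    -- `ι 0` induces an isomorphism `coker (id − φ) ≅ coker (id − φh)`
    (∃ e : (M ⧸ AddMonoidHom.range (AddMonoidHom.id M - φ)) ≃+
        (Mh ⧸ AddMonoidHom.range (AddMonoidHom.id Mh - φh)),
      ∀ x : M, e (QuotientAddGroup.mk x) = QuotientAddGroup.mk (ι 0 x)) := by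
  classical
  -- shift formula for the canonical maps
  have hι_pw : ∀ (k n : ℕ) (x : M), ι n x = ι (n + k) (pw φ k x) := by
    intro k
    induction k with
    | zero => intro n x; rfl
    | succ k ih =>
      intro n x
      rw [hcoc n x, ih (n + 1) (φ x), show n + 1 + k = n + (k + 1) from by omega]
      rfl
  -- zero-exactness, via comparison with the concrete direct limit
  have hzero : ∀ (n : ℕ) (x : M), ι n x = 0 → ∃ k, pw φ k x = 0 := by
    haveI : DirectedSystem (fun _ : ℕ => M) (fun i j _ => pw φ (j - i)) := by
      constructor
      · intro i x; simp [pw_zero]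
      · intro k j i hij hjk x
        rw [← pw_add, show k - j + (j - i) = k - i from by omega]
    set L := AddCommGroup.DirectLimit (fun _ : ℕ => M) (fun i j _ => pw φ (j - i)) with hL
    have hof : ∀ (n : ℕ) (x : M),
        AddCommGroup.DirectLimit.of (fun _ : ℕ => M) (fun i j _ => pw φ (j - i)) n x
          = AddCommGroup.DirectLimit.of (fun _ : ℕ => M) (fun i j _ => pw φ (j - i)) (n + 1)
            (φ x) := by
      intro n x
      have := AddCommGroup.DirectLimit.of_f
        (G := fun _ : ℕ => M) (f := fun i j _ => pw φ (j - i))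
        (i := n) (j := n + 1) (Nat.le_succ n) x
      rw [← this]
      congr 1
      rw [show n + 1 - n = 1 from by omega]
      rfl
    obtain ⟨h, hh, -⟩ := huniv L
      (fun n => AddCommGroup.DirectLimit.of (fun _ : ℕ => M) (fun i j _ => pw φ (j - i)) n) hof
    intro n x hx
    have h0 : AddCommGroup.DirectLimit.of (fun _ : ℕ => M) (fun i j _ => pw φ (j - i)) n x
        = 0 := by
      have := DFunLike.congr_fun (hh n) x
      simp only [AddMonoidHom.comp_apply] at this
      rw [← this, hx, map_zero]
    obtain ⟨j, hij, hj⟩ := AddCommGroup.DirectLimit.of.zero_exact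
      (G := fun _ : ℕ => M) (f := fun i j _ => pw φ (j - i)) n x h0
    exact ⟨j - n, hj⟩
  -- the identity map is the unique endomorphism compatible with ι
  obtain ⟨idh, hidh, hidu⟩ := huniv Mh ι hcoc
  -- joint surjectivity of the ι n
  have hsurj : ∀ y : Mh, ∃ n x, ι n x = y := by
    set S : AddSubgroup Mh := ⨆ n, (ι n).range with hS
    have hmem : ∀ (n : ℕ) (x : M), ι n x ∈ S := fun n x =>
      (le_iSup (fun n => (ι n).range) n) ⟨x, rfl⟩
    obtain ⟨h, hh, -⟩ := huniv S (fun n => (ι n).codRestrict S (hmem n))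
      (fun n x => Subtype.ext (hcoc n x))
    have h1 : S.subtype.comp h = AddMonoidHom.id Mh := by
      have p1 : ∀ n : ℕ, (S.subtype.comp h).comp (ι n) = ι n := by
        intro n
        ext x
        have := DFunLike.congr_fun (hh n) x
        simp only [AddMonoidHom.comp_apply] at this ⊢
        rw [this]
        rfl
      have p2 : ∀ n : ℕ, (AddMonoidHom.id Mh).comp (ι n) = ι n := fun n =>
        AddMonoidHom.id_comp _
      exact (hidu _ p1).trans (hidu _ p2).symm
    intro y
    have hy : y ∈ S := by
      have := DFunLike.congr_fun h1 y
      simp only [AddMonoidHom.comp_apply, AddMonoidHom.id_apply] at this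
      rw [← this]
      exact (h y).2
    have hmono : Monotone (fun n => (ι n).range) := by
      apply monotone_nat_of_le_succ
      rintro n _ ⟨x, rfl⟩
      exact ⟨φ x, (hcoc n x).symm⟩
    obtain ⟨n, hn⟩ := (AddSubgroup.mem_iSup_of_directed hmono.directed_le).mp hy
    obtain ⟨x, hx⟩ := hn
    exact ⟨n, x, hx⟩
  -- the shift map ψ, inverse of φh
  obtain ⟨ψ, hψ, -⟩ := huniv Mh (fun n => ι (n + 1)) (fun n x => hcoc (n + 1) x)
  have e1 : ψ.comp φh = AddMonoidHom.id Mh := by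
    have p1 : ∀ n : ℕ, (ψ.comp φh).comp (ι n) = ι n := by
      intro n
      ext x
      simp only [AddMonoidHom.comp_apply]
      rw [hφh n x]
      have := DFunLike.congr_fun (hψ n) (φ x)
      simp only [AddMonoidHom.comp_apply] at this
      rw [this, ← hcoc n x]
    exact (hidu _ p1).trans (hidu _ fun n => AddMonoidHom.id_comp _).symm
  have e2 : φh.comp ψ = AddMonoidHom.id Mh := by
    have p1 : ∀ n : ℕ, (φh.comp ψ).comp (ι n) = ι n := by
      intro n
      ext x
      simp only [AddMonoidHom.comp_apply]
      have := DFunLike.congr_fun (hψ n) x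
      simp only [AddMonoidHom.comp_apply] at this
      rw [this, hφh (n + 1) x, ← hcoc n x]
    exact (hidu _ p1).trans (hidu _ fun n => AddMonoidHom.id_comp _).symm
  have hbij : Function.Bijective φh := by
    refine Function.bijective_iff_has_inverse.mpr ⟨ψ, fun y => ?_, fun y => ?_⟩
    · have := DFunLike.congr_fun e1 y
      simpa using this
    · have := DFunLike.congr_fun e2 y
      simpa using this
  refine ⟨hbij, ?_, ?_⟩
  -- kernel isomorphism
  · have hmemker : ∀ x : M, x ∈ AddMonoidHom.ker (AddMonoidHom.id M - φ) ↔ φ x = x := by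
      intro x
      rw [AddMonoidHom.mem_ker, AddMonoidHom.sub_apply, AddMonoidHom.id_apply, sub_eq_zero]
      exact eq_comm
    have hmemkerh : ∀ y : Mh, y ∈ AddMonoidHom.ker (AddMonoidHom.id Mh - φh) ↔ φh y = y := by
      intro y
      rw [AddMonoidHom.mem_ker, AddMonoidHom.sub_apply, AddMonoidHom.id_apply, sub_eq_zero]
      exact eq_comm
    set K : (AddMonoidHom.ker (AddMonoidHom.id M - φ)) →+
        (AddMonoidHom.ker (AddMonoidHom.id Mh - φh)) :=
      AddMonoidHom.codRestrict
        ((ι 0).comp (AddMonoidHom.ker (AddMonoidHom.id M - φ)).subtype) _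
        (fun x => by
          simp only [AddMonoidHom.comp_apply, AddSubgroup.coe_subtype]
          rw [hmemkerh, hφh 0 (x : M), (hmemker (x : M)).mp x.2]) with hK
    have hKinj : Function.Injective K := by
      rw [injective_iff_map_eq_zero]
      intro x hx
      have hx0 : ι 0 (x : M) = 0 := by
        have := congrArg (Subtype.val) hx
        simpa [hK] using this
      obtain ⟨k, hk⟩ := hzero 0 (x : M) hx0
      have hfix : φ (x : M) = (x : M) := (hmemker (x : M)).mp x.2
      have : (x : M) = 0 := by rw [← pw_fix φ hfix k, hk]
      exact Subtype.ext this
    have hKsurj : Function.Surjective K := by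
      rintro ⟨y, hy⟩
      obtain ⟨n, x, hx⟩ := hsurj y
      have hyfix : φh y = y := (hmemkerh y).mp hy
      have h0 : ι n (x - φ x) = 0 := by
        rw [map_sub, ← hφh n x, hx, hyfix, sub_self]
      obtain ⟨k, hk⟩ := hzero n _ h0
      set z := pw φ k x with hz
      have hzfix : φ z = z := by
        rw [hz, pw_comm]
        have : pw φ k x - pw φ k (φ x) = 0 := by rw [← map_sub]; exact hk
        rw [← sub_eq_zero]
        rw [← neg_sub, this, neg_zero]
      refine ⟨⟨z, (hmemker z).mpr hzfix⟩, ?_⟩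
      apply Subtype.ext
      show ι 0 z = y
      rw [hι_pw (n + k) 0 z, Nat.zero_add, pw_fix φ hzfix, ← hx, hι_pw k n x]
    refine ⟨AddEquiv.ofBijective K ⟨hKinj, hKsurj⟩, fun x => rfl⟩
  -- cokernel isomorphism
  · set R := AddMonoidHom.range (AddMonoidHom.id M - φ) with hR
    set Rh := AddMonoidHom.range (AddMonoidHom.id Mh - φh) with hRh
    have hmapR : ∀ (n : ℕ) (r : M), r ∈ R → ι n r ∈ Rh := by
      rintro n r ⟨w, rfl⟩
      refine ⟨ι n w, ?_⟩
      simp only [AddMonoidHom.sub_apply, AddMonoidHom.id_apply, map_sub]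
      rw [hφh n w]
    have htel : ∀ (k : ℕ) (x : M), x - pw φ k x ∈ R := by
      intro k
      induction k with
      | zero => intro x; rw [pw_zero, sub_self]; exact zero_mem R
      | succ k ih =>
        intro x
        have h1 : pw φ k x - φ (pw φ k x) ∈ R :=
          ⟨pw φ k x, by simp [AddMonoidHom.sub_apply]⟩
        have := add_mem (ih x) h1
        rwa [sub_add_sub_cancel, pw_comm, ← pw_succ] at this
    have hcond : ∀ x ∈ R, ((QuotientAddGroup.mk' Rh).comp (ι 0)) x = 0 := by
      intro x hx
      simp only [AddMonoidHom.comp_apply, QuotientAddGroup.mk'_apply]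
      rw [QuotientAddGroup.eq_zero_iff]
      exact hmapR 0 x hx
    set F : (M ⧸ R) →+ (Mh ⧸ Rh) :=
      QuotientAddGroup.lift R ((QuotientAddGroup.mk' Rh).comp (ι 0)) hcond with hF
    have hFmk : ∀ x : M, F (QuotientAddGroup.mk x) = QuotientAddGroup.mk (ι 0 x) :=
      fun x => rfl
    have hFinj : Function.Injective F := by
      rw [injective_iff_map_eq_zero]
      intro q hq
      obtain ⟨x, rfl⟩ := QuotientAddGroup.mk_surjective q
      rw [hFmk, QuotientAddGroup.eq_zero_iff] at hq
      obtain ⟨u, hu⟩ := hq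
      obtain ⟨n, w, rfl⟩ := hsurj u
      have hu' : ι 0 x = ι n (w - φ w) := by
        rw [← hu]
        simp only [AddMonoidHom.sub_apply, AddMonoidHom.id_apply, map_sub]
        rw [hφh n w]
      have hx0 : ι n (pw φ n x) = ι 0 x := by
        rw [hι_pw n 0 x, Nat.zero_add]
      have h0 : ι n (pw φ n x - (w - φ w)) = 0 := by
        rw [map_sub, sub_eq_zero, hx0, hu']
      obtain ⟨k, hk⟩ := hzero n _ h0
      have hkk : pw φ k (pw φ n x) = pw φ k w - φ (pw φ k w) := by
        have h1 : pw φ k (pw φ n x) - pw φ k (w - φ w) = 0 := by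
          rw [← map_sub]; exact hk
        rw [sub_eq_zero.mp h1, map_sub, pw_comm]
      have hm1 : x - pw φ k (pw φ n x) ∈ R := by
        rw [← pw_add]
        exact htel (k + n) x
      have hm2 : pw φ k (pw φ n x) ∈ R := by
        refine ⟨pw φ k w, ?_⟩
        rw [AddMonoidHom.sub_apply, AddMonoidHom.id_apply, ← hkk]
      have hxR : x ∈ R := by
        have := add_mem hm1 hm2
        rwa [sub_add_cancel] at this
      rw [QuotientAddGroup.eq_zero_iff]
      exact hxR
    have hFsurj : Function.Surjective F := by
      intro q
      obtain ⟨v, rfl⟩ := QuotientAddGroup.mk_surjective q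
      obtain ⟨n, x, rfl⟩ := hsurj v
      refine ⟨QuotientAddGroup.mk x, ?_⟩
      rw [hFmk]
      rw [QuotientAddGroup.eq_iff_sub_mem]
      have : ι 0 x - ι n x = ι n (pw φ n x - x) := by
        rw [map_sub]
        congr 1
        rw [hι_pw n 0 x, Nat.zero_add]
      rw [this]
      apply hmapR
      have := neg_mem (htel n x)
      rwa [neg_sub] at this
    refine ⟨AddEquiv.ofBijective F ⟨hFinj, hFsurj⟩, fun x => hFmk x⟩
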